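/- If an O(V)-invariant homogeneous construction assigns to each alternating form F on V a bilinear form T(F) that is a polynomial of degree 2 in F with values built from complete contractions, and T(F) vanishes whenever F = 0 with T having no F-independent term, then (for positive definite g) T(F)(u,v) = a·⟨ι_u F, ι_v F⟩ + b·|F|²·g(u,v) for some constants a, b. -/

import Mathlib

open Matrix

namespace EQMC

variable {n : ℕ}

abbrev Mn (n : ℕ) := Matrix (Fin n) (Fin n) ℝ

/-- the elementary antisymmetric matrix -/
def sk (i j : Fin n) : Mn n := Matrix.single i j (1:ℝ) - Matrix.single j i (1:ℝ)

lemma transpose_std (i j : Fin n) (c : ℝ) : (Matrix.single i j c)ᵀ = Matrix.single j i c := by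
  ext a b
  simp [Matrix.single, Matrix.transpose_apply, and_comm]

lemma sk_transpose (i j : Fin n) : (sk i j)ᵀ = -(sk i j) := by
  simp [sk, transpose_sub, transpose_std]

lemma sk_same (i : Fin n) : sk i i = 0 := by simp [sk]

lemma sk_swap (i j : Fin n) : sk j i = -(sk i j) := by simp [sk]

lemma sk_mul_sk_self (i j : Fin n) (h : i ≠ j) :
    sk i j * (sk i j)ᵀ = Matrix.single i i 1 + Matrix.single j j 1 := by
  rw [sk_transpose]
  simp [sk, mul_sub, sub_mul, single_mul_single_of_ne, h, h.symm]

lemma sk_mul_sk_shared (u v w : Fin n) (huv : u ≠ v) (huw : u ≠ w) (hvw : v ≠ w) :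
    sk u v * (sk u w)ᵀ = Matrix.single v w 1 := by
  rw [sk_transpose]
  simp [sk, mul_sub, sub_mul, single_mul_single_of_ne, huv, huw, hvw, huv.symm, huw.symm, hvw.symm]

lemma sk_mul_sk_disj (i j k l : Fin n) (hik : i ≠ k) (hil : i ≠ l) (hjk : j ≠ k) (hjl : j ≠ l) :
    sk i j * (sk k l)ᵀ = 0 := by
  rw [sk_transpose]
  simp [sk, mul_sub, sub_mul, single_mul_single_of_ne, hik, hil, hjk, hjl, hik.symm, hil.symm,
    hjk.symm, hjl.symm]

lemma trace_std (i j : Fin n) (c : ℝ) :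
    trace (Matrix.single i j c) = if i = j then c else 0 := by
  split_ifs with h
  · subst h; exact trace_single_eq_same i c
  · exact trace_single_eq_of_ne i j c h

/-- sign flip matrix at coordinate m -/
def Dm (m : Fin n) : Mn n := Matrix.diagonal (fun t => if t = m then (-1:ℝ) else 1)

lemma Dm_transpose (m : Fin n) : (Dm m)ᵀ = Dm m := diagonal_transpose _

lemma Dm_orth (m : Fin n) : Dm m * (Dm m)ᵀ = 1 := by
  rw [Dm_transpose, Dm, diagonal_mul_diagonal]
  have h : (fun t => (if t = m then (-1:ℝ) else 1) * (if t = m then (-1:ℝ) else 1)) =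
      fun _ => 1 := by
    funext t; split_ifs <;> norm_num
  rw [h, diagonal_one]

lemma Dm_conj_apply (m : Fin n) (M : Mn n) (x y : Fin n) :
    (Dm m * M * (Dm m)ᵀ) x y
      = ((if x = m then (-1:ℝ) else 1) * (if y = m then (-1:ℝ) else 1)) * M x y := by
  rw [Dm_transpose, Dm, Matrix.mul_diagonal, Matrix.diagonal_mul]
  ring

lemma Dm_conj_std (m i j : Fin n) (c : ℝ) :
    Dm m * Matrix.single i j c * (Dm m)ᵀ
      = ((if i = m then (-1:ℝ) else 1) * (if j = m then (-1:ℝ) else 1)) • Matrix.single i j c := by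
  ext x y
  rw [Dm_conj_apply]
  by_cases hx : i = x <;> by_cases hy : j = y <;>
    simp [hx, hy, Matrix.single] <;> ring_nf

lemma Dm_conj_sk (m i j : Fin n) :
    Dm m * sk i j * (Dm m)ᵀ
      = ((if i = m then (-1:ℝ) else 1) * (if j = m then (-1:ℝ) else 1)) • sk i j := by
  simp only [sk, Matrix.mul_sub, Matrix.sub_mul, smul_sub, Dm_conj_std]
  ring_nf

/-- permutation matrix -/
def Pm (σ : Equiv.Perm (Fin n)) : Mn n := Matrix.of fun x y => if x = σ y then (1:ℝ) else 0

lemma Pm_mul_apply (σ : Equiv.Perm (Fin n)) (M : Mn n) (x y : Fin n) :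
    (Pm σ * M) x y = M (σ.symm x) y := by
  rw [Matrix.mul_apply]
  have h : ∀ k, (Pm σ x k) * M k y = if k = σ.symm x then M k y else 0 := by
    intro k
    simp only [Pm, Matrix.of_apply]
    by_cases h : x = σ k
    · have hk : k = σ.symm x := (Equiv.eq_symm_apply σ).mpr h.symm
      rw [if_pos h, if_pos hk, one_mul]
    · have hk : ¬ (k = σ.symm x) := fun hk => h (by rw [hk, Equiv.apply_symm_apply])
      rw [if_neg h, if_neg hk, zero_mul]
  simp_rw [h]
  simp

lemma mul_Pm_transpose_apply (σ : Equiv.Perm (Fin n)) (M : Mn n) (x y : Fin n) :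
    (M * (Pm σ)ᵀ) x y = M x (σ.symm y) := by
  rw [Matrix.mul_apply]
  have h : ∀ k, M x k * ((Pm σ)ᵀ k y) = if k = σ.symm y then M x k else 0 := by
    intro k
    simp only [Pm, Matrix.transpose_apply, Matrix.of_apply]
    by_cases h : y = σ k
    · have hk : k = σ.symm y := (Equiv.eq_symm_apply σ).mpr h.symm
      rw [if_pos h, if_pos hk, mul_one]
    · have hk : ¬ (k = σ.symm y) := fun hk => h (by rw [hk, Equiv.apply_symm_apply])
      rw [if_neg h, if_neg hk, mul_zero]
  simp_rw [h]
  simp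

lemma Pm_conj_apply (σ : Equiv.Perm (Fin n)) (M : Mn n) (x y : Fin n) :
    (Pm σ * M * (Pm σ)ᵀ) x y = M (σ.symm x) (σ.symm y) := by
  rw [mul_Pm_transpose_apply, Pm_mul_apply]

lemma Pm_orth (σ : Equiv.Perm (Fin n)) : Pm σ * (Pm σ)ᵀ = 1 := by
  ext x y
  rw [mul_Pm_transpose_apply]
  simp only [Pm, Matrix.of_apply, Matrix.one_apply]
  by_cases h : x = y <;> simp [h]

lemma Pm_conj_sk (σ : Equiv.Perm (Fin n)) (i j : Fin n) :
    Pm σ * sk i j * (Pm σ)ᵀ = sk (σ i) (σ j) := by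
  ext x y
  rw [Pm_conj_apply]
  simp only [sk, Matrix.sub_apply, Matrix.single, Matrix.of_apply]
  congr 1 <;> congr 1 <;>
    simp [Equiv.eq_symm_apply, eq_comm]

/-- rotation by angle with cosine = sine = c in the (v,w) plane -/
def Rot (c : ℝ) (v w : Fin n) : Mn n :=
  1 + (c - 1) • (Matrix.single v v (1:ℝ) + Matrix.single w w 1)
    + c • Matrix.single w v 1 - c • Matrix.single v w 1

lemma Rot_transpose (c : ℝ) (v w : Fin n) : (Rot c v w)ᵀ = Rot c w v := by
  simp only [Rot, transpose_sub, transpose_add, transpose_smul, transpose_one, transpose_std]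
  module

lemma Rot_orth (c : ℝ) (hc : c * c = 1/2) (v w : Fin n) (hvw : v ≠ w) :
    Rot c v w * (Rot c v w)ᵀ = 1 := by
  rw [Rot_transpose c v w]
  simp only [Rot, add_mul, mul_add, sub_mul, mul_sub, smul_mul_assoc, mul_smul_comm,
    Matrix.one_mul, Matrix.mul_one, single_mul_single_same, mul_one,
    single_mul_single_of_ne, hvw, hvw.symm, ne_eq, not_false_eq_true, smul_zero]
  match_scalars <;> ring_nf <;> nlinarith [hc]

lemma Rot_conj_sk (c : ℝ) (u v w : Fin n) (huv : u ≠ v) (huw : u ≠ w) (hvw : v ≠ w) :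
    Rot c v w * sk u v * (Rot c v w)ᵀ = c • sk u v + c • sk u w := by
  rw [Rot_transpose c v w]
  simp only [Rot, sk, add_mul, mul_add, sub_mul, mul_sub, smul_mul_assoc, mul_smul_comm,
    Matrix.one_mul, Matrix.mul_one, single_mul_single_same, mul_one,
    single_mul_single_of_ne, huv, huw, hvw, huv.symm, huw.symm, hvw.symm,
    ne_eq, not_false_eq_true, smul_zero, smul_sub, smul_add, zero_sub, sub_zero, zero_add,
    add_zero, mul_zero, zero_mul]
  match_scalars <;> ring

lemma Rot_key (c : ℝ) (hc : c * c = 1/2) (γ δ : ℝ) (u v w : Fin n)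
    (huv : u ≠ v) (huw : u ≠ w) (hvw : v ≠ w) :
    Rot c v w * (γ • (Matrix.single u u (1:ℝ) + Matrix.single v v 1) + δ • (1 : Mn n))
        * (Rot c v w)ᵀ
      = γ • Matrix.single u u (1:ℝ) + (γ/2) • Matrix.single v v (1:ℝ)
        + (γ/2) • Matrix.single v w 1 + (γ/2) • Matrix.single w v 1
        + (γ/2) • Matrix.single w w 1 + δ • (1 : Mn n) := by
  rw [Rot_transpose c v w]
  have h1 : Rot c v w * (1 : Mn n) * Rot c w v = 1 := by
    rw [Matrix.mul_one, ← Rot_transpose c v w]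
    exact Rot_orth c hc v w hvw
  simp only [Matrix.mul_add, Matrix.add_mul, smul_mul_assoc, mul_smul_comm, h1]
  simp only [Rot, add_mul, mul_add, sub_mul, mul_sub, smul_mul_assoc, mul_smul_comm,
    Matrix.one_mul, Matrix.mul_one, single_mul_single_same, mul_one,
    single_mul_single_of_ne, huv, huw, hvw, huv.symm, huw.symm, hvw.symm,
    ne_eq, not_false_eq_true, smul_zero, smul_sub, smul_add, zero_sub, sub_zero, zero_add,
    add_zero, mul_zero, zero_mul]
  match_scalars <;> first | ring1 | linear_combination γ * hc

lemma exists_perm_triple (u v w u' v' w' : Fin n)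
    (h1 : u ≠ v) (h2 : u ≠ w) (h3 : v ≠ w)
    (h1' : u' ≠ v') (h2' : u' ≠ w') (h3' : v' ≠ w') :
    ∃ σ : Equiv.Perm (Fin n), σ u = u' ∧ σ v = v' ∧ σ w = w' := by
  set τ1 := Equiv.swap u u' with hτ1
  set τ2 := Equiv.swap (τ1 v) v' with hτ2
  set τ3 := Equiv.swap (τ2 (τ1 w)) w' with hτ3
  refine ⟨τ3 * τ2 * τ1, ?_, ?_, ?_⟩
  · have e1 : τ1 u = u' := Equiv.swap_apply_left u u'
    have hv1 : τ1 v ≠ u' := by rw [← e1]; exact fun h => h1 (τ1.injective h).symm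
    have e2 : τ2 u' = u' := Equiv.swap_apply_of_ne_of_ne (Ne.symm hv1) h1'
    have hw2 : τ2 (τ1 w) ≠ u' := by
      rw [← e2]; intro h
      rw [← e1] at h
      exact h2 (τ1.injective (τ2.injective h)).symm
    have e3 : τ3 u' = u' := Equiv.swap_apply_of_ne_of_ne (Ne.symm hw2) h2'
    simp [Equiv.Perm.mul_apply, e1, e2, e3]
  · have e2 : τ2 (τ1 v) = v' := Equiv.swap_apply_left _ _
    have hw2 : τ2 (τ1 w) ≠ v' := by
      rw [← e2]; exact fun h => h3 (τ1.injective (τ2.injective h)).symm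
    have e3 : τ3 v' = v' := Equiv.swap_apply_of_ne_of_ne (Ne.symm hw2) h3'
    simp [Equiv.Perm.mul_apply, e2, e3]
  · simp [Equiv.Perm.mul_apply, hτ3, Equiv.swap_apply_left]

lemma exists_third (hn : 3 ≤ n) (i j : Fin n) : ∃ t : Fin n, t ≠ i ∧ t ≠ j := by
  have h0 : (0:ℕ) < n := by omega
  have h1 : (1:ℕ) < n := by omega
  have h2 : (2:ℕ) < n := by omega
  have d01 : (⟨0, h0⟩ : Fin n) ≠ ⟨1, h1⟩ := by simp [Fin.ext_iff]
  have d02 : (⟨0, h0⟩ : Fin n) ≠ ⟨2, h2⟩ := by simp [Fin.ext_iff]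
  have d12 : (⟨1, h1⟩ : Fin n) ≠ ⟨2, h2⟩ := by simp [Fin.ext_iff]
  by_cases c0 : (⟨0, h0⟩ : Fin n) ≠ i ∧ (⟨0, h0⟩ : Fin n) ≠ j
  · exact ⟨_, c0⟩
  by_cases c1 : (⟨1, h1⟩ : Fin n) ≠ i ∧ (⟨1, h1⟩ : Fin n) ≠ j
  · exact ⟨_, c1⟩
  rw [not_and_or, not_ne_iff, not_ne_iff] at c0 c1
  rcases c0 with h | h <;> rcases c1 with h' | h'
  · exact absurd (h.trans h'.symm) d01
  · exact ⟨⟨2, h2⟩, fun hh => d02 (h.trans hh.symm), fun hh => d12 (h'.trans hh.symm)⟩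
  · exact ⟨⟨2, h2⟩, fun hh => d12 (h'.trans hh.symm), fun hh => d02 (h.trans hh.symm)⟩
  · exact absurd (h.trans h'.symm) d01

lemma diag_form_apply (γ δ : ℝ) (i j x y : Fin n) (hij : i ≠ j) :
    ((γ • (Matrix.single i i (1:ℝ) + Matrix.single j j 1) + δ • (1 : Mn n)) : Mn n) x y
      = if x = y then (if x = i ∨ x = j then γ + δ else δ) else 0 := by
  by_cases hxy : x = y
  · subst hxy
    by_cases hx : x = i
    · subst hx
      simp [Matrix.add_apply, Matrix.smul_apply, Matrix.one_apply, Matrix.single,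
        Matrix.of_apply, Ne.symm hij]
    · by_cases hx' : x = j
      · subst hx'
        simp [Matrix.add_apply, Matrix.smul_apply, Matrix.one_apply, Matrix.single,
          Matrix.of_apply, hij]
      · simp [Matrix.add_apply, Matrix.smul_apply, Matrix.one_apply, Matrix.single,
          Matrix.of_apply, Ne.symm hx, Ne.symm hx', hx, hx']
  · have h1 : ¬(i = x ∧ i = y) := fun h => hxy (h.1.symm.trans h.2)
    have h2 : ¬(j = x ∧ j = y) := fun h => hxy (h.1.symm.trans h.2)
    simp [Matrix.add_apply, Matrix.smul_apply, Matrix.one_apply, Matrix.single,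
      Matrix.of_apply, h1, h2, hxy]

section core

variable (B : Mn n →ₗ[ℝ] Mn n →ₗ[ℝ] Mn n)

lemma Qsm (s t : ℝ) (X Y : Mn n) : B (s • X) (t • Y) = (s * t) • B X Y := by
  simp [_root_.map_smul, LinearMap.smul_apply, smul_smul, mul_comm]

variable (hequiv : ∀ A : Mn n, A * Aᵀ = 1 → ∀ F : Mn n, Fᵀ = -F →
    B (A * F * Aᵀ) (A * F * Aᵀ) = A * (B F F) * Aᵀ)

include hequiv in
lemma sB_equiv (A : Mn n) (hA : A * Aᵀ = 1) (X Y : Mn n) (hX : Xᵀ = -X) (hY : Yᵀ = -Y) :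
    B (A * X * Aᵀ) (A * Y * Aᵀ) + B (A * Y * Aᵀ) (A * X * Aᵀ)
      = A * (B X Y + B Y X) * Aᵀ := by
  have hXY : (X + Y)ᵀ = -(X + Y) := by rw [transpose_add, hX, hY, neg_add]
  have h1 := hequiv A hA X hX
  have h2 := hequiv A hA Y hY
  have h3 := hequiv A hA (X + Y) hXY
  rw [Matrix.mul_add, Matrix.add_mul] at h3
  simp only [map_add, LinearMap.add_apply] at h3 ⊢
  simp only [Matrix.mul_add, Matrix.add_mul] at h3 ⊢
  linear_combination (norm := abel) h3 - h1 - h2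

include hequiv in
lemma offdiag_zero (i j : Fin n) (hij : i ≠ j) (x y : Fin n) (hxy : x ≠ y) :
    (B (sk i j) (sk i j)) x y = 0 := by
  have h := hequiv (Dm x) (Dm_orth x) (sk i j) (sk_transpose i j)
  rw [Dm_conj_sk] at h
  rw [Qsm] at h
  have hsq : ((if i = x then (-1:ℝ) else 1) * (if j = x then (-1:ℝ) else 1))
      * ((if i = x then (-1:ℝ) else 1) * (if j = x then (-1:ℝ) else 1)) = 1 := by
    split_ifs <;> norm_num
  rw [hsq, one_smul] at h
  have h' := congrArg (fun M : Mn n => M x y) h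
  rw [Dm_conj_apply] at h'
  rw [if_pos rfl, if_neg (Ne.symm hxy)] at h'
  nlinarith [h']

include hequiv in
lemma Qdiag (hn : 3 ≤ n) :
    ∃ α β : ℝ, ∀ i j : Fin n, i ≠ j →
      B (sk i j) (sk i j)
        = (α - β) • (Matrix.single i i 1 + Matrix.single j j 1) + β • (1 : Mn n) := by
  have h0 : (0:ℕ) < n := by omega
  have h1 : (1:ℕ) < n := by omega
  have h2 : (2:ℕ) < n := by omega
  set z0 : Fin n := ⟨0, h0⟩
  set z1 : Fin n := ⟨1, h1⟩
  set z2 : Fin n := ⟨2, h2⟩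
  have d01 : z0 ≠ z1 := by simp [z0, z1, Fin.ext_iff]
  have d02 : z0 ≠ z2 := by simp [z0, z2, Fin.ext_iff]
  have d12 : z1 ≠ z2 := by simp [z1, z2, Fin.ext_iff]
  set α : ℝ := (B (sk z0 z1) (sk z0 z1)) z0 z0 with hα
  set β : ℝ := (B (sk z0 z1) (sk z0 z1)) z2 z2 with hβ
  have alpha1 : (B (sk z0 z1) (sk z0 z1)) z1 z1 = α := by
    have h := hequiv (Pm (Equiv.swap z0 z1)) (Pm_orth _) (sk z0 z1) (sk_transpose z0 z1)
    rw [Pm_conj_sk, Equiv.swap_apply_left, Equiv.swap_apply_right, sk_swap] at h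
    simp only [map_neg, LinearMap.neg_apply, neg_neg] at h
    have h' := congrArg (fun M : Mn n => M z1 z1) h
    rw [Pm_conj_apply] at h'
    rw [Equiv.symm_swap, Equiv.swap_apply_right] at h'
    exact h'
  refine ⟨α, β, ?_⟩
  intro i j hij
  ext x y
  rw [diag_form_apply _ _ _ _ _ _ hij]
  by_cases hxy : x = y
  · subst hxy
    rw [if_pos rfl]
    by_cases hx : x = i
    · subst hx
      rw [if_pos (Or.inl rfl)]
      obtain ⟨t, hti, htj⟩ := exists_third hn x j
      obtain ⟨σ, hσ0, hσ1, hσ2⟩ := exists_perm_triple z0 z1 z2 x j t d01 d02 d12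
        hij (Ne.symm hti) (Ne.symm htj)
      have h := hequiv (Pm σ) (Pm_orth σ) (sk z0 z1) (sk_transpose z0 z1)
      rw [Pm_conj_sk, hσ0, hσ1] at h
      have h' := congrArg (fun M : Mn n => M x x) h
      rw [Pm_conj_apply] at h'
      have hs : σ.symm x = z0 := by rw [Equiv.symm_apply_eq]; exact hσ0.symm
      rw [hs] at h'
      rw [h', ← hα]
      ring
    · by_cases hx' : x = j
      · subst hx'
        rw [if_pos (Or.inr rfl)]
        obtain ⟨t, hti, htj⟩ := exists_third hn i x
        obtain ⟨σ, hσ0, hσ1, hσ2⟩ := exists_perm_triple z0 z1 z2 i x t d01 d02 d12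
          hij (Ne.symm hti) (Ne.symm htj)
        have h := hequiv (Pm σ) (Pm_orth σ) (sk z0 z1) (sk_transpose z0 z1)
        rw [Pm_conj_sk, hσ0, hσ1] at h
        have h' := congrArg (fun M : Mn n => M x x) h
        rw [Pm_conj_apply] at h'
        have hs : σ.symm x = z1 := by rw [Equiv.symm_apply_eq]; exact hσ1.symm
        rw [hs, alpha1] at h'
        rw [h']
        ring
      · rw [if_neg (by tauto)]
        obtain ⟨σ, hσ0, hσ1, hσ2⟩ := exists_perm_triple z0 z1 z2 i j x d01 d02 d12
          hij (Ne.symm hx) (Ne.symm hx')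
        have h := hequiv (Pm σ) (Pm_orth σ) (sk z0 z1) (sk_transpose z0 z1)
        rw [Pm_conj_sk, hσ0, hσ1] at h
        have h' := congrArg (fun M : Mn n => M x x) h
        rw [Pm_conj_apply] at h'
        have hs : σ.symm x = z2 := by rw [Equiv.symm_apply_eq]; exact hσ2.symm
        rw [hs] at h'
        exact h'
  · rw [if_neg hxy]
    exact offdiag_zero B hequiv i j hij x y hxy

include hequiv in
lemma shared_sB (α β : ℝ)
    (hαβ : ∀ i j : Fin n, i ≠ j →
      B (sk i j) (sk i j)
        = (α - β) • (Matrix.single i i 1 + Matrix.single j j 1) + β • (1 : Mn n))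
    (u v w : Fin n) (huv : u ≠ v) (huw : u ≠ w) (hvw : v ≠ w) :
    B (sk u v) (sk u w) + B (sk u w) (sk u v)
      = (α - β) • (Matrix.single v w 1 + Matrix.single w v 1) := by
  set c : ℝ := Real.sqrt 2 / 2 with hcdef
  have hc : c * c = 1/2 := by
    rw [hcdef, div_mul_div_comm, Real.mul_self_sqrt (by norm_num)]
    norm_num
  have hA := Rot_orth c hc v w hvw
  have h := hequiv (Rot c v w) hA (sk u v) (sk_transpose u v)
  rw [Rot_conj_sk c u v w huv huw hvw] at h
  have hexp : B (c • sk u v + c • sk u w) (c • sk u v + c • sk u w)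
      = (1/2 : ℝ) • (B (sk u v) (sk u v) + (B (sk u v) (sk u w) + B (sk u w) (sk u v))
          + B (sk u w) (sk u w)) := by
    simp only [map_add, LinearMap.add_apply, Qsm, hc]
    module
  rw [hexp, hαβ u v huv, hαβ u w huw, Rot_key c hc (α - β) β u v w huv huw hvw] at h
  have h4 := congrArg (fun M : Mn n => (2:ℝ) • M) h
  linear_combination (norm := module) h4

include hequiv in
lemma disj_sB (i j k l : Fin n) (hij : i ≠ j) (hkl : k ≠ l)
    (hik : i ≠ k) (hil : i ≠ l) (hjk : j ≠ k) (hjl : j ≠ l) :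
    B (sk i j) (sk k l) + B (sk k l) (sk i j) = 0 := by
  ext x y
  rw [Matrix.zero_apply]
  have main : ∀ m : Fin n, m ≠ x → m ≠ y →
      (((if i = m then (-1:ℝ) else 1) * (if j = m then (-1:ℝ) else 1))
        * ((if k = m then (-1:ℝ) else 1) * (if l = m then (-1:ℝ) else 1)) = -1) →
      (B (sk i j) (sk k l) + B (sk k l) (sk i j)) x y = 0 := by
    intro m hmx hmy hval
    have h := sB_equiv B hequiv (Dm m) (Dm_orth m) (sk i j) (sk k l)
      (sk_transpose i j) (sk_transpose k l)
    rw [Dm_conj_sk, Dm_conj_sk] at h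
    rw [Qsm, Qsm] at h
    rw [mul_comm ((if k = m then (-1:ℝ) else 1) * (if l = m then (-1:ℝ) else 1))] at h
    rw [hval] at h
    have h' := congrArg (fun M : Mn n => M x y) h
    simp only [Matrix.smul_apply, Matrix.add_apply, smul_eq_mul] at h'
    rw [Dm_conj_apply] at h'
    rw [if_neg (fun hh => hmx (Eq.symm hh)), if_neg (fun hh => hmy (Eq.symm hh))] at h'
    simp only [Matrix.add_apply, one_mul] at h'
    simp only [Matrix.add_apply]
    nlinarith [h']
  by_cases c1 : i ≠ x ∧ i ≠ y
  · refine main i c1.1 c1.2 ?_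
    rw [if_pos rfl, if_neg (Ne.symm hij), if_neg (Ne.symm hik), if_neg (Ne.symm hil)]
    norm_num
  · rw [not_and_or, not_ne_iff, not_ne_iff] at c1
    by_cases c2 : j ≠ x ∧ j ≠ y
    · refine main j c2.1 c2.2 ?_
      rw [if_neg hij, if_pos rfl, if_neg (Ne.symm hjk), if_neg (Ne.symm hjl)]
      norm_num
    · rw [not_and_or, not_ne_iff, not_ne_iff] at c2
      have hkx : k ≠ x := by
        intro hh; rcases c1 with h | h <;> rcases c2 with h' | h'
        · exact hij (h.trans h'.symm)
        · exact hik (h.trans hh.symm)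
        · exact hjk (h'.trans hh.symm)
        · exact hij (h.trans h'.symm)
      have hky : k ≠ y := by
        intro hh; rcases c1 with h | h <;> rcases c2 with h' | h'
        · exact hij (h.trans h'.symm)
        · exact hjk (h'.trans hh.symm)
        · exact hik (h.trans hh.symm)
        · exact hij (h.trans h'.symm)
      refine main k hkx hky ?_
      rw [if_neg hik, if_neg hjk, if_pos rfl, if_neg (Ne.symm hkl)]
      norm_num

end core

/-- the difference between the symmetrized quadratic map and its conjectured form -/
noncomputable def Psi (a b : ℝ) (B : Mn n →ₗ[ℝ] Mn n →ₗ[ℝ] Mn n) :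
    Mn n →ₗ[ℝ] Mn n →ₗ[ℝ] Mn n :=
  LinearMap.mk₂ ℝ
    (fun X Y => B X Y + B Y X - a • (X * Yᵀ) - a • (Y * Xᵀ)
      - (b * trace (X * Yᵀ)) • (1 : Mn n) - (b * trace (Y * Xᵀ)) • (1 : Mn n))
    (by
      intro m1 m2 y
      simp only [map_add, LinearMap.add_apply, Matrix.add_mul, Matrix.mul_add, transpose_add,
        trace_add, mul_add, add_smul]
      module)
    (by
      intro c m y
      simp only [_root_.map_smul, LinearMap.smul_apply, smul_mul_assoc, mul_smul_comm,
        transpose_smul, trace_smul, smul_eq_mul]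
      module)
    (by
      intro m y1 y2
      simp only [map_add, LinearMap.add_apply, Matrix.add_mul, Matrix.mul_add, transpose_add,
        trace_add, mul_add, add_smul]
      module)
    (by
      intro c m y
      simp only [_root_.map_smul, LinearMap.smul_apply, smul_mul_assoc, mul_smul_comm,
        transpose_smul, trace_smul, smul_eq_mul]
      module)

lemma Psi_apply (a b : ℝ) (B : Mn n →ₗ[ℝ] Mn n →ₗ[ℝ] Mn n) (X Y : Mn n) :
    Psi a b B X Y = B X Y + B Y X - a • (X * Yᵀ) - a • (Y * Xᵀ)
      - (b * trace (X * Yᵀ)) • (1 : Mn n) - (b * trace (Y * Xᵀ)) • (1 : Mn n) := rfl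

section psiZero

variable (B : Mn n →ₗ[ℝ] Mn n →ₗ[ℝ] Mn n)
variable (hequiv : ∀ A : Mn n, A * Aᵀ = 1 → ∀ F : Mn n, Fᵀ = -F →
    B (A * F * Aᵀ) (A * F * Aᵀ) = A * (B F F) * Aᵀ)
variable (α β : ℝ)
variable (hαβ : ∀ i j : Fin n, i ≠ j →
    B (sk i j) (sk i j)
      = (α - β) • (Matrix.single i i 1 + Matrix.single j j 1) + β • (1 : Mn n))

include hαβ in
lemma psi_same (i j : Fin n) (hij : i ≠ j) : Psi (α - β) (β/2) B (sk i j) (sk i j) = 0 := by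
  rw [Psi_apply, hαβ i j hij, sk_mul_sk_self i j hij]
  rw [trace_add, trace_std, trace_std, if_pos rfl, if_pos rfl]
  match_scalars <;> ring

include hequiv hαβ in
lemma psi_shared (u v w : Fin n) (huv : u ≠ v) (huw : u ≠ w) (hvw : v ≠ w) :
    Psi (α - β) (β/2) B (sk u v) (sk u w) = 0 := by
  have hs := shared_sB B hequiv α β hαβ u v w huv huw hvw
  rw [Psi_apply]
  rw [sk_mul_sk_shared u v w huv huw hvw, sk_mul_sk_shared u w v huw huv (Ne.symm hvw)]
  rw [trace_std, trace_std, if_neg hvw, if_neg (Ne.symm hvw)]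
  rw [show B (sk u v) (sk u w) + B (sk u w) (sk u v)
      = (α - β) • (Matrix.single v w 1 + Matrix.single w v 1) from hs]
  match_scalars <;> ring

include hequiv in
lemma psi_disj (i j k l : Fin n) (hij : i ≠ j) (hkl : k ≠ l)
    (hik : i ≠ k) (hil : i ≠ l) (hjk : j ≠ k) (hjl : j ≠ l) :
    Psi (α - β) (β/2) B (sk i j) (sk k l) = 0 := by
  have hs := disj_sB B hequiv i j k l hij hkl hik hil hjk hjl
  rw [Psi_apply]
  rw [sk_mul_sk_disj i j k l hik hil hjk hjl, sk_mul_sk_disj k l i j hik.symm hjk.symm hil.symm hjl.symm]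
  rw [show B (sk i j) (sk k l) + B (sk k l) (sk i j) = 0 from hs]
  simp

include hequiv hαβ in
lemma psi_all (i j k l : Fin n) : Psi (α - β) (β/2) B (sk i j) (sk k l) = 0 := by
  by_cases hij : i = j
  · subst hij; rw [sk_same]; simp
  by_cases hkl : k = l
  · subst hkl; rw [sk_same]; simp
  by_cases hik : i = k
  · subst hik
    by_cases hjl : j = l
    · subst hjl; exact psi_same B α β hαβ i j hij
    · exact psi_shared B hequiv α β hαβ i j l hij hkl hjl
  · by_cases hil : i = l
    · subst hil
      by_cases hjk : j = k
      · subst hjk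
        rw [show sk j i = -(sk i j) from sk_swap i j, map_neg]
        rw [show Psi (α - β) (β/2) B (sk i j) (sk i j) = 0 from psi_same B α β hαβ i j hij]
        simp
      · rw [show sk k i = -(sk i k) from sk_swap i k, map_neg]
        rw [show Psi (α - β) (β/2) B (sk i j) (sk i k) = 0 from
          psi_shared B hequiv α β hαβ i j k hij (fun h => hik h) hjk]
        simp
    · by_cases hjk : j = k
      · subst hjk
        rw [show sk i j = -(sk j i) from sk_swap j i, map_neg, LinearMap.neg_apply]
        rw [show Psi (α - β) (β/2) B (sk j i) (sk j l) = 0 from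
          psi_shared B hequiv α β hαβ j i l (fun h => hij h.symm) hkl hil]
        simp
      · by_cases hjl : j = l
        · subst hjl
          rw [show sk i j = -(sk j i) from sk_swap j i,
            show sk k j = -(sk j k) from sk_swap j k]
          simp only [map_neg, LinearMap.neg_apply, neg_neg]
          exact psi_shared B hequiv α β hαβ j i k (fun h => hij h.symm) (fun h => hkl h.symm) hik
        · exact psi_disj B hequiv α β i j k l hij hkl hik hil hjk hjl

end psiZero
end EQMC


open EQMC in
/-- First-fundamental-theorem classification (matrix form): every `O(n)`-equivariant
quadratic polynomial map `T` from antisymmetric matrices (2-forms in an orthonormal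
frame) to symmetric matrices — quadraticity being witnessed by a bilinear map `B`
with `T F = B F F` — is of the form `T(F) = a · FFᵀ + b · tr(FFᵀ) · I`
(i.e. `T(F)(u,v) = a ⟨ι_u F, ι_v F⟩ + b |F|² g(u,v)`), for `n ≥ 3`. -/
theorem equivariant_quadratic_maps_classification
    (n : ℕ) (hn : 3 ≤ n)
    (T : Matrix (Fin n) (Fin n) ℝ → Matrix (Fin n) (Fin n) ℝ)
    (B : Matrix (Fin n) (Fin n) ℝ →ₗ[ℝ] Matrix (Fin n) (Fin n) ℝ →ₗ[ℝ]
      Matrix (Fin n) (Fin n) ℝ)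
    (hquad : ∀ F, T F = B F F)
    (hsymval : ∀ F : Matrix (Fin n) (Fin n) ℝ, Fᵀ = -F → (T F)ᵀ = T F)
    (hequiv : ∀ A : Matrix (Fin n) (Fin n) ℝ, A * Aᵀ = 1 →
      ∀ F : Matrix (Fin n) (Fin n) ℝ, Fᵀ = -F → T (A * F * Aᵀ) = A * T F * Aᵀ) :
    ∃ a b : ℝ, ∀ F : Matrix (Fin n) (Fin n) ℝ, Fᵀ = -F →
      T F = a • (F * Fᵀ) + (b * Matrix.trace (F * Fᵀ)) • (1 : Matrix (Fin n) (Fin n) ℝ) := by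
  have hequiv' : ∀ A : Mn n, A * Aᵀ = 1 → ∀ F : Mn n, Fᵀ = -F →
      B (A * F * Aᵀ) (A * F * Aᵀ) = A * (B F F) * Aᵀ := by
    intro A hA F hF
    have h := hequiv A hA F hF
    rwa [hquad, hquad] at h
  obtain ⟨α, β, hαβ⟩ := Qdiag B hequiv' hn
  refine ⟨α - β, β / 2, ?_⟩
  intro F hF
  rw [hquad]
  have hrep : (2:ℝ) • F = ∑ i : Fin n, ∑ j : Fin n, F i j • sk i j := by
    have h1 : ∑ i : Fin n, ∑ j : Fin n, F i j • sk i j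
        = (∑ i : Fin n, ∑ j : Fin n, Matrix.single i j (F i j))
          - ∑ i : Fin n, ∑ j : Fin n, Matrix.single j i (F i j) := by
      simp_rw [sk, smul_sub, smul_single, smul_eq_mul, mul_one,
        Finset.sum_sub_distrib]
    have h2 : ∑ i : Fin n, ∑ j : Fin n, Matrix.single j i (F i j) = Fᵀ := by
      rw [Finset.sum_comm]
      conv_rhs => rw [matrix_eq_sum_single Fᵀ]
      simp [Matrix.transpose_apply]
    rw [h1, h2, ← matrix_eq_sum_single, hF, sub_neg_eq_add, two_smul]
  have hPsi0 : Psi (α - β) (β/2) B ((2:ℝ) • F) ((2:ℝ) • F) = 0 := by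
    rw [hrep]
    simp only [map_sum, LinearMap.sum_apply, _root_.map_smul, LinearMap.smul_apply]
    simp only [psi_all B hequiv' α β hαβ, smul_zero, Finset.sum_const_zero]
  have h4 : Psi (α - β) (β/2) B ((2:ℝ) • F) ((2:ℝ) • F)
      = (4:ℝ) • Psi (α - β) (β/2) B F F := by
    simp only [_root_.map_smul, LinearMap.smul_apply, smul_smul]
    norm_num
  rw [h4] at hPsi0
  have hzero : Psi (α - β) (β/2) B F F = 0 := by
    have h5 := smul_eq_zero.mp hPsi0
    rcases h5 with h5 | h5
    · norm_num at h5
    · exact h5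
  rw [Psi_apply] at hzero
  have htr : trace (F * Fᵀ) = Matrix.trace (F * Fᵀ) := rfl
  linear_combination (norm := module) (1/2 : ℝ) • hzero
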